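/- Let m > 0, s > 0, Λ > 0 and κ ∈ ℝ. Let g : ℝ → ℝ be continuously differentiable with g(y) ≤ 0 for all y, with |g′(y)| ≤ C₀(1 + |y|) for some constant C₀, and with g′(y) ≥ (κ − y)/Λ for all y ∈ ℝ. Define F(x) = (1/m)·log E[exp(m·g(x + √s·Z))], where Z is standard Gaussian. Then F is differentiable on ℝ and F′(x) ≥ (κ − x)/(Λ + m s) for all x ∈ ℝ. (Inductive step, via Gaussian integration by parts, of the lower bound ∂ₓΦ_γ(t,x) ≥ (κ−x)/λ(t) in Proposition 4.1.) -/

import Mathlib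

open MeasureTheory ProbabilityTheory Real
open scoped ENNReal NNReal

/-- The standard Gaussian measure on `ℝ`. -/
noncomputable def stdGauss : Measure ℝ := gaussianReal 0 1

instance : IsProbabilityMeasure stdGauss := inferInstanceAs (IsProbabilityMeasure (gaussianReal 0 1))
instance : NeZero stdGauss := by infer_instance

lemma phi_eq : gaussianPDFReal 0 1 = fun z => (Real.sqrt (2*Real.pi))⁻¹ * Real.exp (-(1/2) * z^2) := by
  funext z
  unfold gaussianPDFReal
  norm_num
  left
  ring_nf

lemma phi_cont : Continuous (gaussianPDFReal 0 1) := by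
  rw [phi_eq]; fun_prop

lemma phi_hasDeriv (z : ℝ) :
    HasDerivAt (gaussianPDFReal 0 1) (-z * gaussianPDFReal 0 1 z) z := by
  rw [phi_eq]
  have h := (((hasDerivAt_pow 2 z).const_mul (-(1/2) : ℝ)).exp).const_mul
    ((Real.sqrt (2*Real.pi))⁻¹ : ℝ)
  convert h using 1
  rfl
  rfl
  simp
  ring

lemma integral_stdGauss (f : ℝ → ℝ) :
    ∫ z, f z ∂stdGauss = ∫ z, gaussianPDFReal 0 1 z * f z := by
  rw [stdGauss, gaussianReal_of_var_ne_zero 0 one_ne_zero]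
  have h : (gaussianPDF 0 1) = fun z => ((gaussianPDFReal 0 1 z).toNNReal : ℝ≥0∞) := rfl
  rw [h, integral_withDensity_eq_integral_smul ((measurable_gaussianPDFReal 0 1).real_toNNReal)]
  refine integral_congr_ae (Filter.Eventually.of_forall fun z => ?_)
  simp [NNReal.smul_def, Real.coe_toNNReal _ (gaussianPDFReal_nonneg 0 1 z)]

lemma integrable_stdGauss_iff (f : ℝ → ℝ) :
    Integrable f stdGauss ↔ Integrable (fun z => gaussianPDFReal 0 1 z * f z) volume := by
  rw [stdGauss, gaussianReal_of_var_ne_zero 0 one_ne_zero]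
  have h : (gaussianPDF 0 1) = fun z => ((gaussianPDFReal 0 1 z).toNNReal : ℝ≥0∞) := rfl
  rw [h, integrable_withDensity_iff_integrable_smul ((measurable_gaussianPDFReal 0 1).real_toNNReal)]
  refine integrable_congr (Filter.Eventually.of_forall fun z => ?_)
  simp [NNReal.smul_def, Real.coe_toNNReal _ (gaussianPDFReal_nonneg 0 1 z)]

lemma integrable_abs_phi : Integrable (fun z => gaussianPDFReal 0 1 z * |z|) volume := by
  have h := ((integrable_mul_exp_neg_mul_sq (b := 1/2) (by norm_num)).abs).const_mul
    ((Real.sqrt (2*Real.pi))⁻¹ : ℝ)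
  refine h.congr (Filter.Eventually.of_forall fun z => ?_)
  rw [phi_eq]
  simp only [abs_mul, abs_of_pos (Real.exp_pos _)]
  ring_nf

lemma integrable_abs_stdGauss : Integrable (fun z : ℝ => |z|) stdGauss := by
  rw [integrable_stdGauss_iff]
  exact integrable_abs_phi

lemma integrable_stdGauss_of_growth {f : ℝ → ℝ} (hf : Continuous f) {a b : ℝ}
    (h : ∀ z, |f z| ≤ a + b * |z|) : Integrable f stdGauss := by
  refine ((integrable_const a).add (integrable_abs_stdGauss.const_mul b)).mono'
    hf.aestronglyMeasurable (Filter.Eventually.of_forall fun z => ?_)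
  simpa using h z

lemma ibp_stdGauss (m c C₀ x : ℝ) (hm : 0 < m) (hc : 0 < c)
    (g : ℝ → ℝ) (hg : ContDiff ℝ 1 g) (hg0 : ∀ y, g y ≤ 0)
    (hg' : ∀ y, |deriv g y| ≤ C₀ * (1 + |y|)) :
    ∫ z, z * Real.exp (m * g (x + c * z)) ∂stdGauss
      = m * c * ∫ z, deriv g (x + c * z) * Real.exp (m * g (x + c * z)) ∂stdGauss := by
  have hgc : Continuous g := hg.continuous
  have hGc : Continuous (deriv g) := hg.continuous_deriv le_rfl
  have hgd : ∀ y, HasDerivAt g (deriv g y) y := fun y => ((hg.differentiable one_ne_zero) y).hasDerivAt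
  have hC0 : 0 ≤ C₀ := by have h := (abs_nonneg (deriv g 0)).trans (hg' 0); simpa using h
  have he_pos : ∀ z : ℝ, 0 < Real.exp (m * g (x + c * z)) := fun z => Real.exp_pos _
  have he_le : ∀ z : ℝ, Real.exp (m * g (x + c * z)) ≤ 1 := fun z =>
    Real.exp_le_one_iff.2 (mul_nonpos_of_nonneg_of_nonpos hm.le (hg0 _))
  set φ := gaussianPDFReal 0 1 with hφ
  have hφ_nonneg : ∀ z, 0 ≤ φ z := gaussianPDFReal_nonneg 0 1
  -- the function u and its derivative
  set u : ℝ → ℝ := fun z => Real.exp (m * g (x + c * z)) * φ z with hu_def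
  set u' : ℝ → ℝ := fun z =>
    (Real.exp (m * g (x + c * z)) * (m * (deriv g (x + c * z) * c))) * φ z
      + Real.exp (m * g (x + c * z)) * (-z * φ z) with hu'_def
  have hu : ∀ z, HasDerivAt u (u' z) z := by
    intro z
    have h1 : HasDerivAt (fun z : ℝ => x + c * z) c z := by
      simpa using ((hasDerivAt_id z).const_mul c).const_add x
    have h2 : HasDerivAt (fun z : ℝ => g (x + c * z)) (deriv g (x + c * z) * c) z :=
      (hgd (x + c * z)).comp z h1
    exact ((h2.const_mul m).exp).mul (phi_hasDeriv z)
  -- bound on |G(x+c z)|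
  have hGb : ∀ z : ℝ, |deriv g (x + c * z)| ≤ C₀ * (1 + |x| + c * |z|) := by
    intro z
    refine (hg' _).trans (mul_le_mul_of_nonneg_left ?_ hC0)
    have h := abs_add_le x (c * z)
    rw [abs_mul, abs_of_pos hc] at h
    linarith
  have hu_int : Integrable u volume := by
    refine (integrable_gaussianPDFReal 0 1).mono' ?_ (Filter.Eventually.of_forall fun z => ?_)
    · exact ((Real.continuous_exp.comp (continuous_const.mul
        (hgc.comp (continuous_const.add (continuous_const.mul continuous_id))))).mul
        phi_cont).aestronglyMeasurable
    · have : 0 ≤ u z := mul_nonneg (he_pos z).le (hφ_nonneg z)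
      rw [Real.norm_eq_abs, abs_of_nonneg this]
      calc u z ≤ 1 * φ z := by
            exact mul_le_mul_of_nonneg_right (he_le z) (hφ_nonneg z)
        _ = φ z := one_mul _
  have hφc : Continuous φ := phi_cont
  have hu'_cont : Continuous u' := by
    have h0 : Continuous (fun z : ℝ => x + c * z) := by fun_prop
    have h1 : Continuous (fun z : ℝ => Real.exp (m * g (x + c * z))) := by fun_prop
    have h2 : Continuous (fun z : ℝ => deriv g (x + c * z)) := hGc.comp h0
    rw [hu'_def]
    fun_prop
  have hu'_int : Integrable u' volume := by
    refine (((integrable_gaussianPDFReal 0 1).const_mul (m * c * C₀ * (1 + |x|))).add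
      (integrable_abs_phi.const_mul (m * c * C₀ * c + 1))).mono'
      hu'_cont.aestronglyMeasurable (Filter.Eventually.of_forall fun z => ?_)
    rw [Real.norm_eq_abs]
    have habs : |u' z| ≤ (Real.exp (m * g (x + c * z)) * (m * (|deriv g (x + c * z)| * c))) * φ z
        + Real.exp (m * g (x + c * z)) * (|z| * φ z) := by
      refine (abs_add_le _ _).trans (le_of_eq ?_)
      rw [abs_mul, abs_mul, abs_mul, abs_mul, abs_mul, abs_mul, abs_neg,
        abs_of_pos (he_pos z), abs_of_pos hm, abs_of_pos hc, abs_of_nonneg (hφ_nonneg z)]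
    refine habs.trans ?_
    have h1 : (Real.exp (m * g (x + c * z)) * (m * (|deriv g (x + c * z)| * c))) * φ z
        ≤ (1 * (m * ((C₀ * (1 + |x| + c * |z|)) * c))) * φ z := by
      refine mul_le_mul_of_nonneg_right ?_ (hφ_nonneg z)
      refine mul_le_mul (he_le z) ?_
        (mul_nonneg hm.le (mul_nonneg (abs_nonneg _) hc.le)) zero_le_one
      exact mul_le_mul_of_nonneg_left (mul_le_mul_of_nonneg_right (hGb z) hc.le) hm.le
    have h2 : Real.exp (m * g (x + c * z)) * (|z| * φ z) ≤ 1 * (|z| * φ z) := by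
      gcongr
      · exact mul_nonneg (abs_nonneg _) (hφ_nonneg z)
      · exact he_le z
    calc _ ≤ (1 * (m * ((C₀ * (1 + |x| + c * |z|)) * c))) * φ z + 1 * (|z| * φ z) := by
          exact add_le_add h1 h2
      _ = (m * c * C₀ * (1 + |x|)) * φ z + (m * c * C₀ * c + 1) * (φ z * |z|) := by ring
  have key : ∫ z, u' z = 0 := integral_eq_zero_of_hasDerivAt_of_integrable hu hu'_int hu_int
  -- define p and q
  set p : ℝ → ℝ := fun z => φ z * (deriv g (x + c * z) * Real.exp (m * g (x + c * z))) with hp_def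
  set q : ℝ → ℝ := fun z => φ z * (z * Real.exp (m * g (x + c * z))) with hq_def
  have hq_int : Integrable q volume := by
    refine integrable_abs_phi.mono' ?_ (Filter.Eventually.of_forall fun z => ?_)
    · have : Continuous (fun z : ℝ => Real.exp (m * g (x + c * z))) := by fun_prop
      exact (phi_cont.mul (continuous_id.mul this)).aestronglyMeasurable
    · rw [Real.norm_eq_abs, hq_def]
      simp only
      rw [abs_mul, abs_mul, abs_of_nonneg (hφ_nonneg z), abs_of_pos (he_pos z)]
      calc φ z * (|z| * Real.exp (m * g (x + c * z))) ≤ φ z * (|z| * 1) := by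
            nlinarith [mul_nonneg (mul_nonneg (hφ_nonneg z) (abs_nonneg z))
              (sub_nonneg.2 (he_le z))]
        _ = φ z * |z| := by ring
  have hsum : (fun z => u' z + q z) = fun z => (m * c) * p z := by
    funext z
    simp only [hu'_def, hq_def, hp_def]
    ring
  have key2 : (m * c) * ∫ z, p z = ∫ z, q z := by
    rw [← integral_const_mul, ← hsum, integral_add hu'_int hq_int, key, zero_add]
  rw [integral_stdGauss (fun z => z * Real.exp (m * g (x + c * z))),
    integral_stdGauss (fun z => deriv g (x + c * z) * Real.exp (m * g (x + c * z)))]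
  exact key2.symm

/-- inductive step of the lower bound `∂ₓΦ_γ(t,x) ≥ (κ−x)/λ(t)` in
Proposition 4.1: if `g ∈ C¹` satisfies `g ≤ 0`, `|g′(y)| ≤ C₀(1+|y|)` and
`g′(y) ≥ (κ−y)/Λ`, then `F(x) = (1/m)·log E[exp(m·g(x+√s·Z))]` is differentiable with
`F′(x) ≥ (κ−x)/(Λ + m s)`. -/
theorem statement_17 (m s Λ κ C₀ : ℝ) (hm : 0 < m) (hs : 0 < s) (hΛ : 0 < Λ)
    (g : ℝ → ℝ) (hg : ContDiff ℝ 1 g) (hg0 : ∀ y, g y ≤ 0)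
    (hg' : ∀ y, |deriv g y| ≤ C₀ * (1 + |y|))
    (hglb : ∀ y, (κ - y) / Λ ≤ deriv g y) :
    Differentiable ℝ
        (fun x => (1 / m) *
          Real.log (∫ z, Real.exp (m * g (x + Real.sqrt s * z)) ∂stdGauss)) ∧
      ∀ x : ℝ, (κ - x) / (Λ + m * s) ≤
        deriv (fun x => (1 / m) *
          Real.log (∫ z, Real.exp (m * g (x + Real.sqrt s * z)) ∂stdGauss)) x := by
  have hc : 0 < Real.sqrt s := Real.sqrt_pos.2 hs
  set c := Real.sqrt s with hc_def
  have hcc : c * c = s := Real.mul_self_sqrt hs.le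
  have hgc : Continuous g := hg.continuous
  have hGc : Continuous (deriv g) := hg.continuous_deriv le_rfl
  have hgd : ∀ y, HasDerivAt g (deriv g y) y := fun y => ((hg.differentiable one_ne_zero) y).hasDerivAt
  have hC0 : 0 ≤ C₀ := by have h := (abs_nonneg (deriv g 0)).trans (hg' 0); simpa using h
  have he_pos : ∀ x z : ℝ, 0 < Real.exp (m * g (x + c * z)) := fun x z => Real.exp_pos _
  have he_le : ∀ x z : ℝ, Real.exp (m * g (x + c * z)) ≤ 1 := fun x z =>
    Real.exp_le_one_iff.2 (mul_nonpos_of_nonneg_of_nonpos hm.le (hg0 _))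
  have hGb : ∀ x z : ℝ, |deriv g (x + c * z)| ≤ C₀ * (1 + |x| + c * |z|) := by
    intro x z
    refine (hg' _).trans (mul_le_mul_of_nonneg_left ?_ hC0)
    have h := abs_add_le x (c * z)
    rw [abs_mul, abs_of_pos hc] at h
    linarith
  -- integrability facts
  have hE_int : ∀ x, Integrable (fun z => Real.exp (m * g (x + c * z))) stdGauss := by
    intro x
    refine integrable_stdGauss_of_growth (by fun_prop) (a := 1) (b := 0) (fun z => ?_)
    rw [abs_of_pos (he_pos x z)]
    simpa using he_le x z
  have hA_int : ∀ x, Integrable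
      (fun z => deriv g (x + c * z) * Real.exp (m * g (x + c * z))) stdGauss := by
    intro x
    refine integrable_stdGauss_of_growth (by fun_prop)
      (a := C₀ * (1 + |x|)) (b := C₀ * c) (fun z => ?_)
    rw [abs_mul, abs_of_pos (he_pos x z)]
    have h1 : |deriv g (x + c * z)| * Real.exp (m * g (x + c * z)) ≤ |deriv g (x + c * z)| :=
      by nlinarith [he_le x z, abs_nonneg (deriv g (x + c * z)), (he_pos x z).le]
    have h2 := hGb x z
    nlinarith
  have hZ_int : ∀ x, Integrable (fun z => z * Real.exp (m * g (x + c * z))) stdGauss := by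
    intro x
    refine integrable_stdGauss_of_growth (by fun_prop) (a := 0) (b := 1) (fun z => ?_)
    rw [abs_mul, abs_of_pos (he_pos x z)]
    nlinarith [he_le x z, abs_nonneg z, (he_pos x z).le]
  have hEpos : ∀ x, 0 < ∫ z, Real.exp (m * g (x + c * z)) ∂stdGauss := fun x =>
    integral_exp_pos (hE_int x)
  -- derivative of the inner integral
  have hE_deriv : ∀ x₀ : ℝ, HasDerivAt (fun x => ∫ z, Real.exp (m * g (x + c * z)) ∂stdGauss)
      (m * ∫ z, deriv g (x₀ + c * z) * Real.exp (m * g (x₀ + c * z)) ∂stdGauss) x₀ := by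
    intro x₀
    have h := hasDerivAt_integral_of_dominated_loc_of_deriv_le (μ := stdGauss) (𝕜 := ℝ)
      (F := fun x z => Real.exp (m * g (x + c * z)))
      (F' := fun x z => Real.exp (m * g (x + c * z)) * (m * (deriv g (x + c * z) * 1)))
      (x₀ := x₀) (s := Metric.ball x₀ 1) (Metric.ball_mem_nhds x₀ one_pos)
      (Filter.Eventually.of_forall fun x =>
        (Continuous.aestronglyMeasurable (by fun_prop)))
      (hE_int x₀)
      (Continuous.aestronglyMeasurable (by fun_prop))
      (bound := fun z => m * C₀ * ((2 + |x₀|) + c * |z|))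
      (Filter.Eventually.of_forall fun z x hx => ?_)
      (?_)
      (Filter.Eventually.of_forall fun z x hx => ?_)
    · have heq : (∫ z, Real.exp (m * g (x₀ + c * z)) * (m * (deriv g (x₀ + c * z) * 1)) ∂stdGauss)
          = m * ∫ z, deriv g (x₀ + c * z) * Real.exp (m * g (x₀ + c * z)) ∂stdGauss := by
        rw [← integral_const_mul]
        exact integral_congr_ae (Filter.Eventually.of_forall fun z => by ring)
      rw [heq] at h
      exact h.2
    · -- bound
      have hx1 : |x| ≤ |x₀| + 1 := by
        have h1 : |x| - |x₀| ≤ |x - x₀| := abs_sub_abs_le_abs_sub x x₀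
        have h2 : |x - x₀| < 1 := by simpa [Real.dist_eq] using hx
        linarith
      rw [Real.norm_eq_abs, abs_mul, abs_of_pos (he_pos x z), abs_mul, abs_of_pos hm, abs_mul]
      calc Real.exp (m * g (x + c * z)) * (m * (|deriv g (x + c * z)| * |(1:ℝ)|))
          ≤ 1 * (m * ((C₀ * (1 + |x| + c * |z|)) * |(1:ℝ)|)) := by
            refine mul_le_mul (he_le x z) ?_
              (mul_nonneg hm.le (mul_nonneg (abs_nonneg _) (abs_nonneg _))) zero_le_one
            exact mul_le_mul_of_nonneg_left
              (mul_le_mul_of_nonneg_right (hGb x z) (abs_nonneg _)) hm.le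
        _ = m * C₀ * ((1 + |x| ) + c * |z|) := by simp; ring
        _ ≤ m * C₀ * ((2 + |x₀|) + c * |z|) := by
            refine mul_le_mul_of_nonneg_left ?_ (mul_nonneg hm.le hC0)
            linarith
    · -- bound integrable
      refine integrable_stdGauss_of_growth (by fun_prop)
        (a := m * C₀ * (2 + |x₀|)) (b := m * C₀ * c) (fun z => ?_)
      have h0 : 0 ≤ m * C₀ * ((2 + |x₀|) + c * |z|) := by positivity
      rw [abs_of_nonneg h0]
      nlinarith
    · -- differentiability in x
      have h1 : HasDerivAt (fun x : ℝ => x + c * z) 1 x := (hasDerivAt_id x).add_const (c * z)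
      have h2 : HasDerivAt (fun x : ℝ => g (x + c * z)) (deriv g (x + c * z) * 1) x :=
        (hgd (x + c * z)).comp x h1
      exact (h2.const_mul m).exp
  -- derivative of F
  have HF : ∀ x₀ : ℝ, HasDerivAt
      (fun x => 1 / m * Real.log (∫ z, Real.exp (m * g (x + c * z)) ∂stdGauss))
      ((1 / m) * ((m * ∫ z, deriv g (x₀ + c * z) * Real.exp (m * g (x₀ + c * z)) ∂stdGauss)
        / ∫ z, Real.exp (m * g (x₀ + c * z)) ∂stdGauss)) x₀ := fun x₀ =>
    ((hE_deriv x₀).log (hEpos x₀).ne').const_mul (1 / m)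
  refine ⟨fun x => (HF x).differentiableAt, fun x => ?_⟩
  rw [(HF x).deriv]
  set A := ∫ z, deriv g (x + c * z) * Real.exp (m * g (x + c * z)) ∂stdGauss with hA_def
  set B := ∫ z, Real.exp (m * g (x + c * z)) ∂stdGauss with hB_def
  have hBpos : 0 < B := hEpos x
  have hval : 1 / m * (m * A / B) = A / B := by field_simp
  rw [hval]
  -- IBP identity
  have hibp : (∫ z, z * Real.exp (m * g (x + c * z)) ∂stdGauss) = m * c * A :=
    ibp_stdGauss m c C₀ x hm hc g hg hg0 hg'
  -- monotonicity
  have hmono : (κ - x) / Λ * B - (c / Λ) * (∫ z, z * Real.exp (m * g (x + c * z)) ∂stdGauss)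
      ≤ A := by
    have hint1 : Integrable (fun z => ((κ - x) / Λ) * Real.exp (m * g (x + c * z))) stdGauss :=
      (hE_int x).const_mul _
    have hint2 : Integrable (fun z => (c / Λ) * (z * Real.exp (m * g (x + c * z)))) stdGauss :=
      (hZ_int x).const_mul _
    have heq : (κ - x) / Λ * B - (c / Λ) * (∫ z, z * Real.exp (m * g (x + c * z)) ∂stdGauss)
        = ∫ z, (((κ - x) / Λ) * Real.exp (m * g (x + c * z))
            - (c / Λ) * (z * Real.exp (m * g (x + c * z)))) ∂stdGauss := by
      rw [integral_sub hint1 hint2, integral_const_mul, integral_const_mul]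
    rw [heq, hA_def]
    refine integral_mono (hint1.sub hint2) (hA_int x) (fun z => ?_)
    have hp : ((κ - (x + c * z)) / Λ) * Real.exp (m * g (x + c * z))
        ≤ deriv g (x + c * z) * Real.exp (m * g (x + c * z)) :=
      mul_le_mul_of_nonneg_right (hglb _) (he_pos x z).le
    calc ((κ - x) / Λ) * Real.exp (m * g (x + c * z))
          - (c / Λ) * (z * Real.exp (m * g (x + c * z)))
        = ((κ - (x + c * z)) / Λ) * Real.exp (m * g (x + c * z)) := by ring
      _ ≤ deriv g (x + c * z) * Real.exp (m * g (x + c * z)) := hp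
  rw [hibp] at hmono
  have hkey : (κ - x) * B ≤ A * (Λ + m * s) := by
    have h2 : ((κ - x) * B - m * s * A) / Λ ≤ A := by
      have : ((κ - x) * B - m * s * A) / Λ
          = (κ - x) / Λ * B - (c / Λ) * (m * c * A) := by
        rw [← hcc]; ring
      rw [this]; exact hmono
    have h3 := (div_le_iff₀ hΛ).1 h2
    nlinarith
  rw [div_le_div_iff₀ (by positivity) hBpos]
  exact hkey
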